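/- arXiv:1611.05738 — 3 statements merged into one kernel-verified Lean document; each statement's English description precedes it below -/
import Mathlib

section
/- Let ω be a positive definite density matrix on a finite-dimensional Hilbert space and H a Hermitian operator. Then the Bures norm of the Hermitian operator A = ½{⟨H⟩ − H, ω} (anticommutator), where ⟨H⟩ = Tr[Hω], satisfies ‖A‖_ω² = Tr[H²ω] − (Tr[Hω])², i.e. it equals the variance of H in the state ω. -/
open Finset
open scoped ComplexOrder

/-- Matrix element ⟨i|O|j⟩ in the basis `v`. -/
noncomputable def matElem {n : ℕ} (v : Fin n → (Fin n → ℂ))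
    (O : Matrix (Fin n) (Fin n) ℂ) (i j : Fin n) : ℂ :=
  dotProduct (star (v i)) (O.mulVec (v j))

/-- Bures norm squared of `O` with respect to the spectral data `(p, v)`. -/
noncomputable def buresSq {n : ℕ} (p : Fin n → ℝ) (v : Fin n → (Fin n → ℂ))
    (O : Matrix (Fin n) (Fin n) ℂ) : ℝ :=
  ∑ i, ∑ j, 2 * ‖matElem v O i j‖ ^ 2 / (p i + p j)

open scoped Matrix

-- matElem in conjugation form
lemma matElem_eq {n : ℕ} (v : Fin n → (Fin n → ℂ)) (O : Matrix (Fin n) (Fin n) ℂ)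
    (i j : Fin n) :
    matElem v O i j = ((Matrix.of (fun k l => v l k))ᴴ * O * Matrix.of (fun k l => v l k)) i j := by
  simp only [matElem, Matrix.mul_apply, Matrix.conjTranspose_apply, dotProduct,
    Matrix.mulVec, Matrix.of_apply, dotProduct]
  simp only [Finset.mul_sum, Finset.sum_mul]
  rw [Finset.sum_comm]
  apply Finset.sum_congr rfl; intro k _
  apply Finset.sum_congr rfl; intro l _
  simp [Pi.star_apply]; ring

/-- The Bures norm squared of A = ½{⟨H⟩ − H, ω} equals the variance of H in the
    state ω: Tr[H²ω] − (Tr[Hω])². -/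
theorem bures_of_anticommutator_eq_variance {n : ℕ}
    (ω H : Matrix (Fin n) (Fin n) ℂ) (p : Fin n → ℝ) (v : Fin n → (Fin n → ℂ))
    (hω : ω.PosDef) (htr : ω.trace = 1) (hp : ∀ i, 0 < p i)
    (horth : ∀ i j, dotProduct (star (v i)) (v j) = if i = j then 1 else 0)
    (heig : ∀ i, ω.mulVec (v i) = (p i : ℂ) • v i)
    (hH : H.IsHermitian) :
    buresSq p v
        ((1 / 2 : ℂ) •
          (((H * ω).trace • (1 : Matrix (Fin n) (Fin n) ℂ) - H) * ω +
            ω * ((H * ω).trace • (1 : Matrix (Fin n) (Fin n) ℂ) - H))) =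
      ((H * H * ω).trace).re - (((H * ω).trace).re) ^ 2 := by
  classical
  set c : ℂ := (H * ω).trace with hc
  set M : Matrix (Fin n) (Fin n) ℂ := c • 1 - H with hMdef
  set U : Matrix (Fin n) (Fin n) ℂ := Matrix.of (fun k l => v l k) with hUdef
  set D : Matrix (Fin n) (Fin n) ℂ := Matrix.diagonal (fun i => (p i : ℂ)) with hDdef
  -- c is real
  have hcreal : (starRingEnd ℂ) c = c := by
    have h1 : (H * ω)ᴴ = ω * H := by
      rw [Matrix.conjTranspose_mul, hω.1.eq, hH.eq]
    have := (Matrix.trace_conjTranspose (H * ω)).symm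
    rw [h1] at this
    rw [hc]
    calc (starRingEnd ℂ) (H * ω).trace = (ω * H).trace := this.symm ▸ rfl
      _ = (H * ω).trace := Matrix.trace_mul_comm ω H
  -- unitarity
  have hUU : Uᴴ * U = 1 := by
    ext i j
    simpa [hUdef, Matrix.mul_apply, Matrix.conjTranspose_apply, Matrix.one_apply,
      dotProduct] using horth i j
  have hUUc : U * Uᴴ = 1 := mul_eq_one_comm.mp hUU
  have hcancel : ∀ X : Matrix (Fin n) (Fin n) ℂ, U * (Uᴴ * X) = X := by
    intro X; rw [← Matrix.mul_assoc, hUUc, Matrix.one_mul]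
  -- eigen relation as matrix equation
  have hωU : ω * U = U * D := by
    ext k j
    have h := congrFun (heig j) k
    simp only [Matrix.mulVec, dotProduct, Pi.smul_apply, smul_eq_mul] at h
    rw [hDdef, Matrix.mul_diagonal]
    simpa [Matrix.mul_apply, hUdef, mul_comm] using h
  have hDconj : Uᴴ * ω * U = D := by
    rw [Matrix.mul_assoc, hωU, ← Matrix.mul_assoc, hUU, Matrix.one_mul]
  set B : Matrix (Fin n) (Fin n) ℂ := Uᴴ * M * U with hBdef
  -- B is hermitian
  have hMherm : Mᴴ = M := by
    rw [hMdef, Matrix.conjTranspose_sub, Matrix.conjTranspose_smul, Matrix.conjTranspose_one,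
      hH.eq]
    simp [hcreal]
  have hBherm : Bᴴ = B := by
    rw [hBdef, Matrix.conjTranspose_mul, Matrix.conjTranspose_mul, Matrix.conjTranspose_conjTranspose,
      hMherm, Matrix.mul_assoc]
  -- conjugation of products
  have hconjmul : ∀ X Y : Matrix (Fin n) (Fin n) ℂ,
      Uᴴ * (X * Y) * U = (Uᴴ * X * U) * (Uᴴ * Y * U) := by
    intro X Y
    calc Uᴴ * (X * Y) * U = Uᴴ * X * (U * (Uᴴ * (Y * U))) := by
          rw [hcancel]; simp only [Matrix.mul_assoc]
      _ = (Uᴴ * X * U) * (Uᴴ * Y * U) := by simp only [Matrix.mul_assoc]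
  -- the anticommutator matrix element
  have hA : ∀ i j, matElem v ((1 / 2 : ℂ) • (M * ω + ω * M)) i j
      = (((p i + p j) / 2 : ℝ) : ℂ) * B i j := by
    intro i j
    rw [matElem_eq]
    have : Uᴴ * ((1 / 2 : ℂ) • (M * ω + ω * M)) * U
        = (1 / 2 : ℂ) • (B * D + D * B) := by
      rw [Matrix.mul_smul, Matrix.smul_mul, Matrix.mul_add, Matrix.add_mul,
        hconjmul, hconjmul, hDconj]
    rw [← hUdef, this]
    simp only [Matrix.smul_apply, Matrix.add_apply, hDdef, Matrix.mul_diagonal,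
      Matrix.diagonal_mul, smul_eq_mul]
    push_cast
    ring
  -- trace conjugation invariance
  have htrconj : ∀ X : Matrix (Fin n) (Fin n) ℂ, (Uᴴ * X * U).trace = X.trace := by
    intro X
    rw [Matrix.trace_mul_comm, hcancel]
  -- hermiticity of entries
  have hji : ∀ i j, B j i = (starRingEnd ℂ) (B i j) := by
    intro i j
    conv_lhs => rw [← hBherm]
    simp [Matrix.conjTranspose_apply]
  -- trace of M*M*ω as a real sum
  have hMMω : (M * M * ω).trace = ((∑ i, ∑ j, p i * ‖B i j‖ ^ 2 : ℝ) : ℂ) := by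
    have h1 : (M * M * ω).trace = (B * B * D).trace := by
      rw [← htrconj (M * M * ω), hconjmul, hconjmul, hDconj]
    rw [h1, Matrix.trace]
    push_cast
    refine Finset.sum_congr rfl fun i _ => ?_
    rw [Matrix.diag_apply, hDdef, Matrix.mul_diagonal, Matrix.mul_apply, Finset.sum_mul]
    refine Finset.sum_congr rfl fun j _ => ?_
    rw [hji i j, Complex.mul_conj, ← Complex.sq_norm]
    push_cast
    ring
  -- trace of M*M*ω in terms of H
  have htraceM : (M * M * ω).trace = (H * H * ω).trace - c ^ 2 := by
    have hcomm : (ω * H).trace = c := by rw [hc, Matrix.trace_mul_comm]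
    simp only [hMdef, Matrix.sub_mul, Matrix.mul_sub, Matrix.smul_mul, Matrix.mul_smul,
      Matrix.one_mul, Matrix.mul_one, Matrix.trace_sub, Matrix.trace_smul, smul_eq_mul,
      smul_smul]
    rw [htr, ← hc]
    ring
  -- c is real
  have hce : c = (c.re : ℂ) := (Complex.conj_eq_iff_re.mp hcreal).symm
  -- the key real identity
  have key : ∑ i, ∑ j, p i * ‖B i j‖ ^ 2 = ((H * H * ω).trace).re - c.re ^ 2 := by
    have h := congrArg Complex.re (hMMω.symm.trans htraceM)
    rw [Complex.ofReal_re, Complex.sub_re] at h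
    have h2 : (c ^ 2).re = c.re ^ 2 := by
      rw [hce]; norm_num [← Complex.ofReal_pow]
    rw [h2] at h
    exact h
  -- compute buresSq
  have habs : ∀ i j, ‖matElem v ((1 / 2 : ℂ) • (M * ω + ω * M)) i j‖ ^ 2
      = ((p i + p j) / 2) ^ 2 * ‖B i j‖ ^ 2 := by
    intro i j
    rw [hA, norm_mul, mul_pow, Complex.norm_real, Real.norm_eq_abs,
      abs_of_nonneg (by have := (hp i).le; have := (hp j).le; positivity)]
  have hlhs : buresSq p v ((1 / 2 : ℂ) • (M * ω + ω * M))
      = ∑ i, ∑ j, ((p i + p j) / 2) * ‖B i j‖ ^ 2 := by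
    unfold buresSq
    refine Finset.sum_congr rfl fun i _ => Finset.sum_congr rfl fun j _ => ?_
    rw [habs]
    have hpos : p i + p j ≠ 0 := ne_of_gt (add_pos (hp i) (hp j))
    field_simp
  have hsym : ∑ i, ∑ j, ((p i + p j) / 2) * ‖B i j‖ ^ 2
      = ∑ i, ∑ j, p i * ‖B i j‖ ^ 2 := by
    have hsplit : ∀ i j, ((p i + p j) / 2) * ‖B i j‖ ^ 2
        = (p i / 2) * ‖B i j‖ ^ 2 + (p j / 2) * ‖B i j‖ ^ 2 := by
      intro i j; ring
    have h2 : ∑ i, ∑ j, (p j / 2) * ‖B i j‖ ^ 2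
        = ∑ i, ∑ j, (p i / 2) * ‖B i j‖ ^ 2 := by
      rw [Finset.sum_comm]
      refine Finset.sum_congr rfl fun i _ => Finset.sum_congr rfl fun j _ => ?_
      rw [hji i j, Complex.norm_conj]
    simp only [hsplit, Finset.sum_add_distrib]
    rw [h2, ← Finset.sum_add_distrib]
    simp only [← Finset.sum_add_distrib]
    refine Finset.sum_congr rfl fun i _ => Finset.sum_congr rfl fun j _ => ?_
    ring
  calc buresSq p v ((1 / 2 : ℂ) • (M * ω + ω * M))
      = ∑ i, ∑ j, p i * ‖B i j‖ ^ 2 := by rw [hlhs, hsym]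
    _ = ((H * H * ω).trace).re - c.re ^ 2 := key
end

section
/- Let H_A ⊗ H_B be a finite-dimensional bipartite Hilbert space, ω a positive definite density matrix on it, ρ = Tr_B ω its reduced state on A (positive definite), and H an operator acting only on B with ‖⟨H⟩·I − H‖_∞ ≤ 2J where ⟨H⟩ = Tr[Hω]. Define B̂ = ½ Tr_B[{⟨H⟩·I − H, ω}]. Then ‖ρ^{-1/2} B̂ ρ^{-1/2}‖_∞ ≤ 2J. -/
open Finset Kronecker
open scoped ComplexOrder Matrix.Norms.L2Operator

open Matrix
open scoped InnerProductSpace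

/-- Partial trace over the second (B) factor. -/
noncomputable def ptraceB {a b : ℕ} (ω : Matrix (Fin a × Fin b) (Fin a × Fin b) ℂ) :
    Matrix (Fin a) (Fin a) ℂ :=
  Matrix.of fun i j => ∑ k : Fin b, ω (i, k) (j, k)

lemma selfadjoint_norm_le {E : Type*} [NormedAddCommGroup E] [InnerProductSpace ℂ E]
    (T : E →L[ℂ] E) (hsym : ∀ x y : E, ⟪T x, y⟫_ℂ = ⟪x, T y⟫_ℂ) {c : ℝ} (hc : 0 ≤ c)
    (h : ∀ x : E, ‖(⟪x, T x⟫_ℂ)‖ ≤ c * ‖x‖ ^ 2) : ‖T‖ ≤ c := by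
  apply T.opNorm_le_bound hc
  intro y
  rcases eq_or_ne (T y) 0 with h0 | h0
  · simp [h0]; positivity
  have hy : y ≠ 0 := fun hy => h0 (by simp [hy])
  have hyn : 0 < ‖y‖ := norm_pos_iff.mpr hy
  have hTyn : 0 < ‖T y‖ := norm_pos_iff.mpr h0
  have key : ∀ x : E, Complex.re (⟪x, T y⟫_ℂ) ≤ c / 2 * (‖x‖ ^ 2 + ‖y‖ ^ 2) := by
    intro x
    have e1 : ⟪x + y, T (x + y)⟫_ℂ - ⟪x - y, T (x - y)⟫_ℂ
        = 2 * (⟪x, T y⟫_ℂ + ⟪y, T x⟫_ℂ) := by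
      simp only [map_add, map_sub, inner_add_left, inner_add_right, inner_sub_left,
        inner_sub_right]
      ring
    have e2 : ⟪y, T x⟫_ℂ = starRingEnd ℂ (⟪x, T y⟫_ℂ) := by
      rw [← hsym x y, ← inner_conj_symm]
    have e3 : Complex.re (⟪x + y, T (x + y)⟫_ℂ) - Complex.re (⟪x - y, T (x - y)⟫_ℂ)
        = 4 * Complex.re (⟪x, T y⟫_ℂ) := by
      rw [← Complex.sub_re, e1, e2, Complex.add_conj]
      simp only [Complex.mul_re, Complex.ofReal_re, Complex.ofReal_im, Complex.re_ofNat,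
        Complex.im_ofNat]
      ring
    have b1 : Complex.re (⟪x + y, T (x + y)⟫_ℂ) ≤ c * ‖x + y‖ ^ 2 :=
      (Complex.re_le_norm _).trans (h _)
    have b2 : -Complex.re (⟪x - y, T (x - y)⟫_ℂ) ≤ c * ‖x - y‖ ^ 2 := by
      have := (Complex.abs_re_le_norm (⟪x - y, T (x - y)⟫_ℂ)).trans (h _)
      cases abs_cases (Complex.re (⟪x - y, T (x - y)⟫_ℂ)) with
      | inl h' => linarith [h'.1]
      | inr h' => linarith [h'.1]
    have par : ‖x + y‖ ^ 2 + ‖x - y‖ ^ 2 = 2 * (‖x‖ ^ 2 + ‖y‖ ^ 2) := by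
      have := parallelogram_law_with_norm ℂ x y
      nlinarith [this]
    nlinarith [e3, b1, b2]
  have := key (((‖y‖ / ‖T y‖ : ℝ) : ℂ) • T y)
  rw [inner_smul_left] at this
  have e4 : ⟪T y, T y⟫_ℂ = (‖T y‖ : ℂ) ^ 2 := inner_self_eq_norm_sq_to_K (T y)
  rw [e4, Complex.conj_ofReal] at this
  have e5 : Complex.re (((‖y‖ / ‖T y‖ : ℝ) : ℂ) * (‖T y‖ : ℂ) ^ 2) = ‖y‖ * ‖T y‖ := by
    have : (((‖y‖ / ‖T y‖ : ℝ) : ℂ) * (‖T y‖ : ℂ) ^ 2) = ((‖y‖ * ‖T y‖ : ℝ) : ℂ) := by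
      push_cast
      field_simp
    rw [this, Complex.ofReal_re]
  rw [e5] at this
  have e6 : ‖((‖y‖ / ‖T y‖ : ℝ) : ℂ) • T y‖ = ‖y‖ := by
    rw [norm_smul]
    simp only [Complex.norm_real, Real.norm_eq_abs, abs_of_nonneg (div_nonneg hyn.le hTyn.le)]
    field_simp
  rw [e6] at this
  have h7 : ‖T y‖ * ‖y‖ ≤ (c * ‖y‖) * ‖y‖ := by nlinarith
  exact le_of_mul_le_mul_right h7 hyn

lemma quadform_le {n : ℕ} (K : Matrix (Fin n) (Fin n) ℂ) (x : Fin n → ℂ) :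
    ‖dotProduct (star x) (K.mulVec x)‖ ≤ ‖K‖ * (dotProduct (star x) x).re := by
  set x' : EuclideanSpace ℂ (Fin n) := (WithLp.equiv 2 _).symm x with hx'
  have h1 : dotProduct (star x) (K.mulVec x) = ⟪x', Matrix.toEuclideanLin K x'⟫_ℂ := by rw [EuclideanSpace.inner_eq_star_dotProduct, dotProduct_comm]; rfl
  have h2 : (dotProduct (star x) x).re = ‖x'‖ ^ 2 := by
    have h3 : dotProduct (star x) x = ⟪x', x'⟫_ℂ := by rw [EuclideanSpace.inner_eq_star_dotProduct, dotProduct_comm]; rfl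
    rw [h3, inner_self_eq_norm_sq_to_K]; norm_cast
  rw [h1, h2]
  calc ‖⟪x', Matrix.toEuclideanLin K x'⟫_ℂ‖ ≤ ‖x'‖ * ‖Matrix.toEuclideanLin K x'‖ :=
        norm_inner_le_norm _ _
    _ ≤ ‖x'‖ * (‖K‖ * ‖x'‖) := by
        apply mul_le_mul_of_nonneg_left _ (norm_nonneg _)
        exact K.l2_opNorm_mulVec x'
    _ = ‖K‖ * ‖x'‖ ^ 2 := by ring

open scoped MatrixOrder in
lemma trace_mul_le {n : ℕ} {M : Matrix (Fin n) (Fin n) ℂ} (hM : M.PosSemidef)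
    (K : Matrix (Fin n) (Fin n) ℂ) :
    ‖(M * K).trace‖ ≤ ‖K‖ * M.trace.re := by
  set R := CFC.sqrt M with hR
  have hRH : R.IsHermitian := (CFC.sqrt_nonneg M).posSemidef.1
  have hst : ∀ p k, R k p = star (R p k) := by
    intro p k
    conv_lhs => rw [← hRH]
    rw [Matrix.conjTranspose_apply]
  have hMR : R * R = M := CFC.sqrt_mul_sqrt_self M hM.nonneg
  have htr : (M * K).trace = (R * K * R).trace := by
    rw [← hMR, Matrix.mul_assoc, Matrix.mul_assoc, Matrix.trace_mul_comm, Matrix.mul_assoc]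
  have hdiag : ∀ k, (R * K * R) k k
      = dotProduct (star (fun q => R q k)) (K.mulVec (fun q => R q k)) := by
    intro k
    simp only [Matrix.mul_apply, dotProduct, Matrix.mulVec, Pi.star_apply,
      Finset.sum_mul, Finset.mul_sum]
    rw [Finset.sum_comm]
    refine Finset.sum_congr rfl fun p _ => Finset.sum_congr rfl fun q _ => ?_
    rw [hst p k]
    ring
  have hdiag2 : ∀ k, (R * R) k k
      = dotProduct (star (fun q => R q k)) (fun q => R q k) := by
    intro k
    simp only [Matrix.mul_apply, dotProduct, Pi.star_apply]
    refine Finset.sum_congr rfl fun p _ => ?_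
    rw [hst p k]
  rw [htr]
  calc ‖(R * K * R).trace‖ = ‖∑ k, (R * K * R) k k‖ := rfl
    _ ≤ ∑ k, ‖(R * K * R) k k‖ := norm_sum_le _ _
    _ ≤ ∑ k, ‖K‖ * (dotProduct (star (fun q => R q k)) (fun q => R q k)).re := by
        refine Finset.sum_le_sum fun k _ => ?_
        rw [hdiag k]
        exact quadform_le K _
    _ = ‖K‖ * M.trace.re := by
        rw [← Finset.mul_sum]
        congr 1
        rw [← hMR]
        show (∑ k, (dotProduct (star (fun q => R q k)) (fun q => R q k)).re)
          = (R * R).trace.re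
        rw [Matrix.trace]
        rw [Complex.re_sum]
        exact Finset.sum_congr rfl fun k _ => by rw [Matrix.diag_apply, hdiag2 k]

lemma matrix_norm_le {n : ℕ} (A : Matrix (Fin n) (Fin n) ℂ) (hA : A.IsHermitian) {c : ℝ}
    (hc : 0 ≤ c)
    (h : ∀ x : Fin n → ℂ, ‖dotProduct (star x) (A.mulVec x)‖
      ≤ c * (dotProduct (star x) x).re) : ‖A‖ ≤ c := by
  rw [Matrix.cstar_norm_def]
  apply selfadjoint_norm_le _ ?_ hc ?_
  · intro x y
    have hsymm := Matrix.isHermitian_iff_isSymmetric.mp hA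
    have h1 := hsymm x y
    rwa [← Matrix.coe_toEuclideanCLM_eq_toEuclideanLin] at h1
  · intro x
    have h1 : (⟪x, Matrix.toEuclideanCLM (𝕜 := ℂ) A x⟫_ℂ)
        = dotProduct (star (WithLp.equiv 2 _ x)) (A.mulVec (WithLp.equiv 2 _ x)) := by
      rw [EuclideanSpace.inner_eq_star_dotProduct]
      rw [dotProduct_comm]; rfl
    have h2 : ‖x‖ ^ 2
        = (dotProduct (star (WithLp.equiv 2 _ x)) (WithLp.equiv 2 _ x)).re := by
      have h3 : dotProduct (star (WithLp.equiv 2 _ x)) (WithLp.equiv 2 _ x)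
          = ⟪x, x⟫_ℂ := by rw [EuclideanSpace.inner_eq_star_dotProduct, dotProduct_comm]; rfl
      rw [h3, inner_self_eq_norm_sq_to_K]; norm_cast
    rw [h1, h2]
    exact h _

lemma ptrace_quadform {a b : ℕ} (Y : Matrix (Fin a × Fin b) (Fin a × Fin b) ℂ)
    (φ : Fin a → ℂ) :
    dotProduct (star φ) ((ptraceB Y).mulVec φ)
    = (((Matrix.of fun (p : Fin a × Fin b) (r : Fin b) => if p.2 = r then φ p.1 else 0))ᴴ * Y *
       (Matrix.of fun (p : Fin a × Fin b) (r : Fin b) => if p.2 = r then φ p.1 else 0)).trace := by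
  rw [Matrix.trace]
  simp only [Matrix.diag_apply, Matrix.mul_apply, Matrix.conjTranspose_apply, Matrix.of_apply,
    Fintype.sum_prod_type, apply_ite (star : ℂ → ℂ), star_zero, ite_mul, zero_mul,
    mul_ite, mul_zero, Finset.sum_ite_eq', Finset.mem_univ, if_true,
    dotProduct, Matrix.mulVec, ptraceB, Finset.mul_sum, Finset.sum_mul, Pi.star_apply]
  refine Eq.trans (Finset.sum_congr rfl fun i _ => Finset.sum_comm) ?_
  refine Eq.trans Finset.sum_comm ?_
  refine Finset.sum_congr rfl fun q _ => Eq.trans Finset.sum_comm ?_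
  exact Finset.sum_congr rfl fun j _ => Finset.sum_congr rfl fun i _ => by ring

lemma intertwine {a b : ℕ} (Kb : Matrix (Fin b) (Fin b) ℂ) (φ : Fin a → ℂ) :
    ((1 : Matrix (Fin a) (Fin a) ℂ) ⊗ₖ Kb) *
      (Matrix.of fun (p : Fin a × Fin b) (r : Fin b) => if p.2 = r then φ p.1 else 0)
    = (Matrix.of fun (p : Fin a × Fin b) (r : Fin b) => if p.2 = r then φ p.1 else 0) * Kb := by
  ext ⟨i, k⟩ q
  simp only [Matrix.mul_apply, Matrix.of_apply, Matrix.kroneckerMap_apply, Matrix.one_apply,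
    Fintype.sum_prod_type, ite_mul, zero_mul, mul_ite, mul_zero, one_mul,
    Finset.sum_ite_eq', Finset.sum_ite_eq, Finset.mem_univ, if_true]
  ring

/-- If ω is a faithful state on H_A ⊗ H_B with reduced state ρ = Tr_B ω,
    S = ρ^{-1/2}, and H = 1 ⊗ HB acts only on B with ‖⟨H⟩I − H‖_∞ ≤ 2J, then
    B̂ = ½Tr_B{⟨H⟩I − H, ω} satisfies ‖ρ^{-1/2} B̂ ρ^{-1/2}‖_∞ ≤ 2J. -/
theorem sandwiched_op_norm_le {a b : ℕ}
    (ω : Matrix (Fin a × Fin b) (Fin a × Fin b) ℂ)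
    (S : Matrix (Fin a) (Fin a) ℂ) (HB : Matrix (Fin b) (Fin b) ℂ) (J : ℝ)
    (Hfull : Matrix (Fin a × Fin b) (Fin a × Fin b) ℂ) (e : ℂ)
    (Bhat : Matrix (Fin a) (Fin a) ℂ)
    (hω : ω.PosDef) (htr : ω.trace = 1)
    (hS : S.PosDef) (hSS : ptraceB ω * (S * S) = 1)
    (hHB : HB.IsHermitian)
    (hHfull : Hfull = (1 : Matrix (Fin a) (Fin a) ℂ) ⊗ₖ HB)
    (he : e = (Hfull * ω).trace)
    (hbound : ‖e • (1 : Matrix (Fin b) (Fin b) ℂ) - HB‖ ≤ 2 * J)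
    (hBhat :
      Bhat = (1 / 2 : ℂ) •
        ptraceB ((e • (1 : Matrix (Fin a × Fin b) (Fin a × Fin b) ℂ) - Hfull) * ω +
          ω * (e • (1 : Matrix (Fin a × Fin b) (Fin a × Fin b) ℂ) - Hfull))) :
    ‖S * Bhat * S‖ ≤ 2 * J := by
  have h2J : (0 : ℝ) ≤ 2 * J := le_trans (norm_nonneg _) hbound
  set Kb : Matrix (Fin b) (Fin b) ℂ := e • (1 : Matrix (Fin b) (Fin b) ℂ) - HB with hKb
  set Kf : Matrix (Fin a × Fin b) (Fin a × Fin b) ℂ :=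
    e • (1 : Matrix (Fin a × Fin b) (Fin a × Fin b) ℂ) - Hfull with hKf
  have hωH : ωᴴ = ω := hω.1
  have hSH : Sᴴ = S := hS.1
  have hHfullH : Hfullᴴ = Hfull := by
    rw [hHfull]
    ext ⟨i, k⟩ ⟨j, q⟩
    simp only [Matrix.conjTranspose_apply, Matrix.kroneckerMap_apply, Matrix.one_apply,
      star_mul']
    by_cases h : i = j
    · subst h
      simp only [if_pos rfl, one_mul]
      conv_lhs => rw [← hHB]
      simp [Matrix.conjTranspose_apply]
    · simp [Matrix.one_apply, h, Ne.symm h]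
  have he_real : star e = e := by
    rw [he, ← Matrix.trace_conjTranspose, Matrix.conjTranspose_mul, hωH, hHfullH,
      Matrix.trace_mul_comm]
  have hKbH : Kbᴴ = Kb := by
    rw [hKb, Matrix.conjTranspose_sub, Matrix.conjTranspose_smul, Matrix.conjTranspose_one,
      hHB.eq, he_real]
  have hKfH : Kfᴴ = Kf := by
    rw [hKf, Matrix.conjTranspose_sub, Matrix.conjTranspose_smul, Matrix.conjTranspose_one,
      hHfullH, he_real]
  have hKf_eq : Kf = (1 : Matrix (Fin a) (Fin a) ℂ) ⊗ₖ Kb := by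
    rw [hKf, hKb, hHfull]
    ext ⟨i, k⟩ ⟨j, q⟩
    simp only [Matrix.sub_apply, Matrix.smul_apply, Matrix.one_apply, Matrix.kroneckerMap_apply,
      smul_eq_mul, Prod.mk.injEq]
    by_cases h : i = j
    · subst h
      by_cases h2 : k = q <;> simp [h2]
    · simp [h]
  have hptraceH : ∀ X : Matrix (Fin a × Fin b) (Fin a × Fin b) ℂ,
      (ptraceB X)ᴴ = ptraceB Xᴴ := by
    intro X
    ext i j
    simp [ptraceB, Matrix.conjTranspose_apply]
  have hBhatH : Bhatᴴ = Bhat := by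
    rw [hBhat, Matrix.conjTranspose_smul, hptraceH, Matrix.conjTranspose_add,
      Matrix.conjTranspose_mul, Matrix.conjTranspose_mul, hωH, hKfH, add_comm (ω * Kf)]
    congr 1
    norm_num
  have hAH : (S * Bhat * S).IsHermitian := by
    show (S * Bhat * S)ᴴ = S * Bhat * S
    rw [Matrix.conjTranspose_mul, Matrix.conjTranspose_mul, hSH, hBhatH, Matrix.mul_assoc]
  have hSρS : S * ptraceB ω * S = 1 := by
    have h2 : (S * S) * ptraceB ω = 1 := mul_eq_one_comm.mp hSS
    have h3 : S * (S * ptraceB ω) = 1 := by rw [← Matrix.mul_assoc]; exact h2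
    have h4 : (S * ptraceB ω) * S = 1 := mul_eq_one_comm.mp h3
    rw [Matrix.mul_assoc] at h4 ⊢
    exact h4
  apply matrix_norm_le _ hAH h2J
  intro ψ
  set φ : Fin a → ℂ := S.mulVec ψ with hφ
  have sandwich : ∀ X : Matrix (Fin a) (Fin a) ℂ,
      dotProduct (star ψ) ((S * X * S).mulVec ψ)
      = dotProduct (star φ) (X.mulVec φ) := by
    intro X
    rw [← Matrix.mulVec_mulVec, ← Matrix.mulVec_mulVec, hφ,
      dotProduct_mulVec (star ψ) S, Matrix.star_mulVec, hSH]
  have hquad0 : dotProduct (star ψ) ((S * Bhat * S).mulVec ψ)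
      = dotProduct (star φ) (Bhat.mulVec φ) := sandwich Bhat
  set Φ : Matrix (Fin a × Fin b) (Fin b) ℂ :=
    Matrix.of fun p q => if p.2 = q then φ p.1 else 0 with hΦ
  set M : Matrix (Fin b) (Fin b) ℂ := Φᴴ * ω * Φ with hMdef
  have hM : M.PosSemidef := hω.posSemidef.conjTranspose_mul_mul_same Φ
  have hPt : ∀ Y : Matrix (Fin a × Fin b) (Fin a × Fin b) ℂ,
      dotProduct (star φ) ((ptraceB Y).mulVec φ) = (Φᴴ * Y * Φ).trace :=
    fun Y => ptrace_quadform Y φ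
  have hIT : Kf * Φ = Φ * Kb := by
    rw [hKf_eq]
    exact intertwine Kb φ
  have hIT2 : Φᴴ * Kf = Kb * Φᴴ := by
    have h1 : (Kf * Φ)ᴴ = (Φ * Kb)ᴴ := by rw [hIT]
    rw [Matrix.conjTranspose_mul, Matrix.conjTranspose_mul, hKfH, hKbH] at h1
    exact h1
  have expand1 : dotProduct (star φ) ((ptraceB (Kf * ω)).mulVec φ)
      = (Kb * M).trace := by
    rw [hPt]
    congr 1
    rw [← Matrix.mul_assoc Φᴴ Kf ω, hIT2]
    simp only [Matrix.mul_assoc]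
    rw [hMdef, Matrix.mul_assoc]
  have expand2 : dotProduct (star φ) ((ptraceB (ω * Kf)).mulVec φ)
      = (M * Kb).trace := by
    rw [hPt]
    congr 1
    rw [← Matrix.mul_assoc Φᴴ ω Kf, Matrix.mul_assoc (Φᴴ * ω) Kf Φ, hIT,
      ← Matrix.mul_assoc]
  have hKey : dotProduct (star φ) (Bhat.mulVec φ) = (M * Kb).trace := by
    have hadd : ptraceB (Kf * ω + ω * Kf) = ptraceB (Kf * ω) + ptraceB (ω * Kf) := by
      ext i j
      simp [ptraceB, Finset.sum_add_distrib]
    rw [hBhat, hadd, Matrix.smul_mulVec, Matrix.add_mulVec, dotProduct_smul,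
      dotProduct_add, expand1, expand2, Matrix.trace_mul_comm Kb M]
    simp only [smul_eq_mul]
    ring
  have hTrρ : M.trace = dotProduct (star φ) ((ptraceB ω).mulVec φ) := (hPt ω).symm
  have hTrM : M.trace = dotProduct (star ψ) ψ := by
    rw [hTrρ, ← sandwich (ptraceB ω), hSρS, Matrix.one_mulVec]
  have hψpos : 0 ≤ (dotProduct (star ψ) ψ).re := by
    simp only [dotProduct, Complex.re_sum, Pi.star_apply]
    apply Finset.sum_nonneg
    intro i _
    have h9 : star (ψ i) * ψ i = (Complex.normSq (ψ i) : ℂ) := by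
      rw [RCLike.star_def, mul_comm, Complex.mul_conj]
    rw [h9, Complex.ofReal_re]
    exact Complex.normSq_nonneg _
  rw [hquad0, hKey]
  calc ‖(M * Kb).trace‖ ≤ ‖Kb‖ * M.trace.re := trace_mul_le hM Kb
    _ ≤ (2 * J) * M.trace.re := by
        apply mul_le_mul_of_nonneg_right hbound
        rw [hTrM]
        exact hψpos
    _ = (2 * J) * (dotProduct (star ψ) ψ).re := by rw [hTrM]
end

section
/- Let ω be the Gibbs state e^{-βH}/Tr e^{-βH} of a Hamiltonian H = ∑_{X∈E} H_X on a finite-dimensional Hilbert space, satisfying exponential clustering: for all X,Y, |⟨H_X H_Y⟩ − ⟨H_X⟩⟨H_Y⟩| ≤ 4(ξ+1) N_∂ J² e^{-d(X,Y)/ξ}, where J = max_X ‖H_X‖_∞. Suppose moreover |{Y ∈ E : d(X,Y) = n}| ≤ M(n+1)² for all X and n. Then for any subset G ⊆ E, Var(∑_{X∈G} H_X) ≤ 8 N_∂ J² |G| M (ξ+1)⁴. -/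
open Finset
open scoped ComplexOrder Matrix.Norms.L2Operator

/-- The Gibbs state ω(β) = e^{-βH}/Tr e^{-βH}. -/
noncomputable def gibbs {n : ℕ} (H : Matrix (Fin n) (Fin n) ℂ) (β : ℝ) :
    Matrix (Fin n) (Fin n) ℂ :=
  ((NormedSpace.exp ((-β : ℂ) • H)).trace)⁻¹ • NormedSpace.exp ((-β : ℂ) • H)

/-- Partial sums of `(m+1)² qᵐ` are bounded by `2/(1-q)³`. -/
lemma geom_sq_sum (q : ℝ) (h0 : 0 ≤ q) (h1 : q < 1) (N : ℕ) :
    ∑ m ∈ Finset.range N, ((m:ℝ)+1)^2 * q^m ≤ 2/(1-q)^3 := by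
  have h1q : 0 < 1 - q := by linarith
  have key : ∀ N : ℕ, ∑ m ∈ Finset.range N, ((m:ℝ)+1)^2 * q^m
      = (1+q)/(1-q)^3 - q^N * (((N:ℝ)+1)^2/(1-q) + 2*((N:ℝ)+1)*q/(1-q)^2 + q*(1+q)/(1-q)^3) := by
    intro N
    induction N with
    | zero => field_simp; ring
    | succ k ih =>
        rw [Finset.sum_range_succ, ih]
        push_cast
        field_simp
        ring
  rw [key]
  have tail : 0 ≤ q^N * (((N:ℝ)+1)^2/(1-q) + 2*((N:ℝ)+1)*q/(1-q)^2 + q*(1+q)/(1-q)^3) := by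
    positivity
  have hle : (1+q)/(1-q)^3 ≤ 2/(1-q)^3 := by
    gcongr
    linarith
  linarith

/-- Theorem 2 (variance of the local Hamiltonian): if the Gibbs state of
    H = ∑_{X∈E} H_X satisfies exponential clustering
    |⟨H_X H_Y⟩ − ⟨H_X⟩⟨H_Y⟩| ≤ 4(ξ+1)N_∂J² e^{-d(X,Y)/ξ} with J = max_X ‖H_X‖_∞,
    and the number of edges at distance n from any edge is at most M(n+1)², then
    for any G ⊆ E the variance of H_G = ∑_{X∈G} H_X satisfies
    |Var H_G| ≤ 8 N_∂ J² |G| M (ξ+1)⁴. -/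
theorem variance_local_hamiltonian {n : ℕ} {ι : Type*} [DecidableEq ι]
    (E G : Finset ι) (Hs : ι → Matrix (Fin n) (Fin n) ℂ) (β : ℝ)
    (d : ι → ι → ℕ) (ξ J M Npartial : ℝ)
    (ω : Matrix (Fin n) (Fin n) ℂ)
    (hω : ω = gibbs (∑ X ∈ E, Hs X) β)
    (hG : G ⊆ E) (hξ : 0 < ξ) (hM : 0 ≤ M) (hNp : 0 ≤ Npartial)
    (hHerm : ∀ X ∈ E, (Hs X).IsHermitian)
    (hJ : ∀ X ∈ E, ‖Hs X‖ ≤ J)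
    (hd : ∀ X Y, d X Y = d Y X)
    (hcluster : ∀ X ∈ E, ∀ Y ∈ E,
      ‖(Hs X * Hs Y * ω).trace - (Hs X * ω).trace * (Hs Y * ω).trace‖ ≤
        4 * (ξ + 1) * Npartial * J ^ 2 * Real.exp (-(d X Y : ℝ) / ξ))
    (hcount : ∀ X ∈ E, ∀ m : ℕ,
      ((E.filter fun Y => d X Y = m).card : ℝ) ≤ M * (m + 1) ^ 2) :
    ‖((∑ X ∈ G, Hs X) * (∑ X ∈ G, Hs X) * ω).trace -
          ((∑ X ∈ G, Hs X) * ω).trace ^ 2‖ ≤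
      8 * Npartial * J ^ 2 * G.card * M * (ξ + 1) ^ 4 := by
  have hξ1 : (0:ℝ) < ξ + 1 := by linarith
  set C : ℝ := 4 * (ξ + 1) * Npartial * J ^ 2 with hC
  have hC0 : 0 ≤ C := by positivity
  set q : ℝ := Real.exp (-1/ξ) with hq
  have hq0 : 0 ≤ q := (Real.exp_pos _).le
  have hq1 : q < 1 := by
    rw [hq, Real.exp_lt_one_iff, neg_div]
    exact neg_lt_zero.2 (by positivity)
  -- 1/(ξ+1) ≤ 1 - q
  have hξexp : 1 + ξ ≤ ξ * Real.exp (1/ξ) := by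
    have h := mul_le_mul_of_nonneg_left (Real.add_one_le_exp (1/ξ)) hξ.le
    rw [mul_add, mul_one, mul_one_div, div_self hξ.ne'] at h
    linarith
  have hqe : q * Real.exp (1/ξ) = 1 := by
    rw [hq, ← Real.exp_add]
    norm_num [neg_div]
  have h1q : (1:ℝ)/(ξ+1) ≤ 1 - q := by
    rw [div_le_iff₀ hξ1]
    have h2 := mul_le_mul_of_nonneg_left hξexp hq0
    nlinarith
  have h1q' : 0 < 1 - q := lt_of_lt_of_le (by positivity) h1q
  have hge : 1 ≤ (1 - q) * (ξ + 1) := (div_le_iff₀ hξ1).1 h1q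
  -- the geometric bound for each X
  have inner : ∀ X ∈ E, ∑ Y ∈ E, Real.exp (-(d X Y : ℝ)/ξ) ≤ M * (2*(ξ+1)^3) := by
    intro X hX
    set N := E.sup (fun Y => d X Y) + 1 with hN
    have hmaps : ∀ Y ∈ E, d X Y ∈ Finset.range N := fun Y hY =>
      Finset.mem_range.2 (Nat.lt_succ_of_le (Finset.le_sup hY))
    rw [← Finset.sum_fiberwise_of_maps_to hmaps (fun Y => Real.exp (-(d X Y : ℝ)/ξ))]
    have step : ∀ m ∈ Finset.range N,
        ∑ Y ∈ E.filter (fun Y => d X Y = m), Real.exp (-(d X Y : ℝ)/ξ)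
          ≤ M * ((m:ℝ)+1)^2 * q^m := by
      intro m _
      have hval : ∑ Y ∈ E.filter (fun Y => d X Y = m), Real.exp (-(d X Y : ℝ)/ξ)
          = ((E.filter (fun Y => d X Y = m)).card : ℝ) * q^m := by
        rw [Finset.sum_congr rfl (fun Y hY => ?_), Finset.sum_const, nsmul_eq_mul]
        have hm : d X Y = m := by
          simpa using (Finset.mem_filter.1 hY).2
        rw [hm, hq, ← Real.exp_nat_mul]
        congr 1
        push_cast
        ring
      rw [hval]
      have hc := hcount X hX m
      have hqm : 0 ≤ q^m := pow_nonneg hq0 m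
      nlinarith
    calc ∑ m ∈ Finset.range N, ∑ Y ∈ E.filter (fun Y => d X Y = m), Real.exp (-(d X Y : ℝ)/ξ)
        ≤ ∑ m ∈ Finset.range N, M * ((m:ℝ)+1)^2 * q^m := Finset.sum_le_sum step
      _ = M * ∑ m ∈ Finset.range N, ((m:ℝ)+1)^2 * q^m := by
          rw [Finset.mul_sum]
          exact Finset.sum_congr rfl fun m _ => by ring
      _ ≤ M * (2/(1-q)^3) := mul_le_mul_of_nonneg_left (geom_sq_sum q hq0 hq1 N) hM
      _ ≤ M * (2*(ξ+1)^3) := by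
          have hp3 : (0:ℝ) < (1-q)^3 := by positivity
          have h3 : 1 ≤ (1-q)^3 * (ξ+1)^3 := by nlinarith [hge, sq_nonneg ((1-q)*(ξ+1))]
          have : 2/(1-q)^3 ≤ 2*(ξ+1)^3 := by
            rw [div_le_iff₀ hp3]
            nlinarith
          exact mul_le_mul_of_nonneg_left this hM
  -- expand the variance as a double sum of covariances
  have expand : ((∑ X ∈ G, Hs X) * (∑ X ∈ G, Hs X) * ω).trace -
      ((∑ X ∈ G, Hs X) * ω).trace ^ 2
      = ∑ X ∈ G, ∑ Y ∈ G,
          ((Hs X * Hs Y * ω).trace - (Hs X * ω).trace * (Hs Y * ω).trace) := by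
    have e1 : ((∑ X ∈ G, Hs X) * (∑ X ∈ G, Hs X) * ω).trace
        = ∑ X ∈ G, ∑ Y ∈ G, (Hs X * Hs Y * ω).trace := by
      rw [Finset.sum_mul_sum]
      simp only [Finset.sum_mul, Matrix.trace_sum]
    have e2 : ((∑ X ∈ G, Hs X) * ω).trace = ∑ X ∈ G, (Hs X * ω).trace := by
      rw [Finset.sum_mul, Matrix.trace_sum]
    rw [e1, e2, sq, Finset.sum_mul_sum, ← Finset.sum_sub_distrib]
    exact Finset.sum_congr rfl fun X _ => (Finset.sum_sub_distrib _ _).symm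
  rw [expand]
  calc ‖∑ X ∈ G, ∑ Y ∈ G,
        ((Hs X * Hs Y * ω).trace - (Hs X * ω).trace * (Hs Y * ω).trace)‖
      ≤ ∑ X ∈ G, ∑ Y ∈ G,
          ‖(Hs X * Hs Y * ω).trace - (Hs X * ω).trace * (Hs Y * ω).trace‖ :=
        (norm_sum_le _ _).trans (Finset.sum_le_sum fun X _ => norm_sum_le _ _)
    _ ≤ ∑ X ∈ G, ∑ Y ∈ G, C * Real.exp (-(d X Y : ℝ)/ξ) :=
        Finset.sum_le_sum fun X hX => Finset.sum_le_sum fun Y hY =>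
          hcluster X (hG hX) Y (hG hY)
    _ ≤ ∑ X ∈ G, ∑ Y ∈ E, C * Real.exp (-(d X Y : ℝ)/ξ) :=
        Finset.sum_le_sum fun X _ =>
          Finset.sum_le_sum_of_subset_of_nonneg hG fun Y _ _ => by positivity
    _ = ∑ X ∈ G, C * ∑ Y ∈ E, Real.exp (-(d X Y : ℝ)/ξ) := by
        simp [Finset.mul_sum]
    _ ≤ ∑ X ∈ G, C * (M * (2*(ξ+1)^3)) :=
        Finset.sum_le_sum fun X hX =>
          mul_le_mul_of_nonneg_left (inner X (hG hX)) hC0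
    _ = (G.card : ℝ) * (C * (M * (2*(ξ+1)^3))) := by
        rw [Finset.sum_const, nsmul_eq_mul]
    _ = 8 * Npartial * J ^ 2 * G.card * M * (ξ + 1) ^ 4 := by
        rw [hC]; ring
end
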